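/- Let α > 1, τ > 0, λ > 1, p(r) = |r|^α/α and p*(η) = |η|^{α'}/α' with 1/α + 1/α' = 1. There exist constants C(λ,τ) > 0 and D(τ,λ) > 0 such that for all η ∈ ℝ: D(τ,λ) exp(2τ p*(η/λ)) ≤ ∫_ℝ exp(2τ(rη − p(r))) dr ≤ C(λ,τ) exp(2τ p*(λη)). -/

import Mathlib

open Real MeasureTheory Set

lemma integrable_exp_neg_abs_rpow {b p : ℝ} (hb : 0 < b) (hp : 1 < p) :
    Integrable fun x : ℝ => Real.exp (-b * |x| ^ p) := by
  have h1 : IntegrableOn (fun x : ℝ => Real.exp (-b * x ^ p)) (Ioi 0) := by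
    have := integrableOn_rpow_mul_exp_neg_mul_rpow (s := 0) (by norm_num) (by linarith) hb
    refine this.congr_fun (fun x hx => by simp [Real.rpow_zero]) measurableSet_Ioi
  have h2 : IntegrableOn (fun x : ℝ => Real.exp (-b * |x| ^ p)) (Ioi 0) := by
    refine h1.congr_fun (fun x hx => ?_) measurableSet_Ioi
    rw [abs_of_pos (mem_Ioi.mp hx)]
  rw [← integrableOn_univ, ← Iio_union_Ici (a := (0:ℝ)), integrableOn_union,
    integrableOn_Ici_iff_integrableOn_Ioi]
  refine ⟨?_, h2⟩
  rw [← (Measure.measurePreserving_neg (volume : Measure ℝ)).integrableOn_comp_preimage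
      (Homeomorph.neg ℝ).measurableEmbedding]
  simp only [Function.comp_def, neg_preimage, neg_Iio, neg_neg, neg_zero, abs_neg]
  exact h2

theorem two_sided_estimate (α α' τ lam : ℝ) (hα : 1 < α) (hα' : 1/α + 1/α' = 1)
    (hτ : 0 < τ) (hlam : 1 < lam) :
    ∃ C D : ℝ, 0 < C ∧ 0 < D ∧ ∀ η : ℝ,
      D * Real.exp (2 * τ * (|η / lam| ^ α' / α'))
          ≤ ∫ r : ℝ, Real.exp (2 * τ * (r * η - |r| ^ α / α)) ∧
      (∫ r : ℝ, Real.exp (2 * τ * (r * η - |r| ^ α / α)))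
          ≤ C * Real.exp (2 * τ * (|lam * η| ^ α' / α')) := by
  have hα0 : (0:ℝ) < α := by linarith
  have hlam0 : (0:ℝ) < lam := by linarith
  have hconj : α.HolderConjugate α' := Real.holderConjugate_iff.mpr ⟨hα, by simpa [one_div] using hα'⟩
  have hα'1 : 1 < α' := hconj.symm.lt
  have hα'0 : (0:ℝ) < α' := by linarith
  have hmul : α * α' = α + α' := hconj.mul_eq_add
  have hexp1 : (α' - 1) * (α - 1) = 1 := by nlinarith [hmul]
  have hinv : 1/α' = 1 - 1/α := by linarith [hα']
  -- constants
  have hlm1 : (1/lam) ^ α < 1 :=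
    Real.rpow_lt_one (by positivity) (by rw [div_lt_one hlam0]; exact hlam) hα0
  have hb : 0 < 2*τ*((1 - (1/lam)^α)/α) := by
    have : (0:ℝ) < (1 - (1/lam)^α)/α := by
      apply div_pos (by linarith) hα0
    positivity
  set b : ℝ := 2*τ*((1 - (1/lam)^α)/α) with hbdef
  set G : ℝ → ℝ := fun r => Real.exp (-b * |r| ^ α) with hGdef
  have hGint : Integrable G := integrable_exp_neg_abs_rpow hb hα
  set C : ℝ := ∫ r, G r with hCdef
  have hC : 0 < C := by
    rw [hCdef, integral_pos_iff_support_of_nonneg (fun r => (Real.exp_pos _).le) hGint]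
    have : Function.support G = univ := by
      ext r; simp [hGdef, Real.exp_ne_zero]
    rw [this]
    simp
  have hθlam : 1 < lam ^ α' := Real.one_lt_rpow_iff_of_pos hlam0 |>.mpr (Or.inl ⟨hlam, hα'0⟩)
  set θ : ℝ := 1 / lam ^ α' with hθdef
  have hθ0 : 0 < θ := by positivity
  have hθ1 : θ < 1 := by rw [hθdef, div_lt_one (by linarith)]; exact hθlam
  set D : ℝ := min (Real.exp (-(2*τ)*(2+1/α))) (1 - θ) with hDdef
  have hD : 0 < D := lt_min (Real.exp_pos _) (by linarith)
  refine ⟨C, D, hC, hD, fun η => ?_⟩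
  set F : ℝ → ℝ := fun r => Real.exp (2 * τ * (r * η - |r| ^ α / α)) with hFdef
  -- pointwise Young bound
  have hpt : ∀ r, F r ≤ Real.exp (2 * τ * (|lam * η| ^ α' / α')) * G r := by
    intro r
    rw [hFdef, hGdef, ← Real.exp_add]
    apply Real.exp_le_exp.mpr
    have hy : r * η ≤ (|r|/lam) ^ α / α + (lam * |η|) ^ α' / α' := by
      have h1 : r * η ≤ (|r|/lam) * (lam * |η|) := by
        calc r * η ≤ |r * η| := le_abs_self _
          _ = |r| * |η| := abs_mul r η
          _ = (|r|/lam) * (lam * |η|) := by field_simp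
      exact h1.trans (Real.young_inequality_of_nonneg (by positivity) (by positivity) hconj)
    have h2 : (|r|/lam) ^ α = (1/lam)^α * |r| ^ α := by
      rw [Real.div_rpow (abs_nonneg r) hlam0.le, Real.div_rpow zero_le_one hlam0.le,
        Real.one_rpow]
      ring
    have h3 : (lam * |η|) ^ α' = |lam * η| ^ α' := by
      rw [abs_mul, abs_of_pos hlam0]
    rw [h2, h3] at hy
    have h4 : r * η - |r| ^ α / α ≤ |lam * η| ^ α' / α' - ((1 - (1/lam)^α)/α) * |r| ^ α := by
      have := hy
      ring_nf at this ⊢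
      nlinarith [this]
    calc 2 * τ * (r * η - |r| ^ α / α)
        ≤ 2 * τ * (|lam * η| ^ α' / α' - ((1 - (1/lam)^α)/α) * |r| ^ α) := by
          apply mul_le_mul_of_nonneg_left h4 (by positivity)
      _ = 2 * τ * (|lam * η| ^ α' / α') + -b * |r| ^ α := by rw [hbdef]; ring
  have hFcont : Continuous F := by
    apply Real.continuous_exp.comp
    have h1 : Continuous fun r : ℝ => |r| ^ α :=
      continuous_abs.rpow_const (fun x => Or.inr hα0.le)
    exact continuous_const.mul ((continuous_id.mul continuous_const).sub (h1.div_const α))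
  have hFpos : ∀ r, 0 ≤ F r := fun r => (Real.exp_pos _).le
  have hFint : Integrable F := by
    apply Integrable.mono' (hGint.const_mul (Real.exp (2 * τ * (|lam * η| ^ α' / α'))))
      hFcont.aestronglyMeasurable
    filter_upwards with r
    rw [Real.norm_eq_abs, abs_of_nonneg (hFpos r)]
    exact hpt r
  constructor
  · -- lower bound
    have key : ∀ a c m : ℝ, a ≤ c → (∀ r ∈ Icc a c, m ≤ F r) →
        m * (c - a) ≤ ∫ r, F r := by
      intro a c m hac hm
      have h1 : m * (volume (Icc a c)).toReal ≤ ∫ r in Icc a c, F r :=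
        by have := setIntegral_ge_of_const_le_real measurableSet_Icc
             (by rw [Real.volume_Icc]; exact ENNReal.ofReal_ne_top) hm hFint.integrableOn
           exact this
      rw [Real.volume_Icc, ENNReal.toReal_ofReal (by linarith)] at h1
      exact h1.trans (setIntegral_le_integral hFint (Filter.Eventually.of_forall hFpos))
    rcases le_or_gt |η| 1 with hsmall | hbig
    · -- |η| ≤ 1
      have hm : ∀ r ∈ Icc (0:ℝ) 1, Real.exp (2 * τ * (-(1 + 1/α))) ≤ F r := by
        intro r hr
        apply Real.exp_le_exp.mpr
        apply mul_le_mul_of_nonneg_left ?_ (by positivity)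
        have h1 : |r| ≤ 1 := abs_le.mpr ⟨by linarith [hr.1], hr.2⟩
        have h2 : |r| ^ α ≤ 1 := Real.rpow_le_one (abs_nonneg r) h1 hα0.le
        have h3 : -1 ≤ r * η := by
          have h4 : |r * η| ≤ 1 := by
            rw [abs_mul]
            calc |r| * |η| ≤ 1 * 1 := mul_le_mul h1 hsmall (abs_nonneg η) zero_le_one
              _ = 1 := mul_one 1
          linarith [neg_abs_le (r * η)]
        have h5 : |r| ^ α / α ≤ 1 / α := by gcongr
        linarith
      have h6 := key 0 1 _ zero_le_one hm
      rw [sub_zero, mul_one] at h6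
      refine le_trans ?_ h6
      have h7 : |η / lam| ^ α' / α' ≤ 1 := by
        have h8 : |η / lam| ≤ 1 := by
          rw [abs_div, abs_of_pos hlam0, div_le_one hlam0]
          linarith
        have h9 : |η / lam| ^ α' ≤ 1 := Real.rpow_le_one (abs_nonneg _) h8 hα'0.le
        calc |η / lam| ^ α' / α' ≤ |η / lam| ^ α' :=
              div_le_self (Real.rpow_nonneg (abs_nonneg _) _) hα'1.le
          _ ≤ 1 := h9
      calc D * Real.exp (2 * τ * (|η / lam| ^ α' / α'))
          ≤ Real.exp (-(2*τ)*(2+1/α)) * Real.exp (2 * τ * 1) := by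
            apply mul_le_mul (min_le_left _ _) ?_ (by positivity) (Real.exp_pos _).le
            apply Real.exp_le_exp.mpr
            apply mul_le_mul_of_nonneg_left h7 (by positivity)
        _ = Real.exp (2 * τ * (-(1 + 1/α))) := by
            rw [← Real.exp_add]; ring_nf
    · -- 1 < |η|
      set e : ℝ := |η| with hedef
      have he0 : 0 < e := by rw [hedef]; positivity
      have he1 : 1 ≤ e := hbig.le
      set t : ℝ := e ^ (α' - 1) with htdef
      have ht0 : 0 < t := Real.rpow_pos_of_pos he0 _
      have ht1 : 1 ≤ t := by
        rw [htdef]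
        calc (1:ℝ) = 1 ^ (α' - 1) := (Real.one_rpow _).symm
          _ ≤ e ^ (α' - 1) := Real.rpow_le_rpow zero_le_one he1 (by linarith)
      have hte : t * e = e ^ α' := by
        have h := (Real.rpow_add he0 (α' - 1) 1).symm
        rw [Real.rpow_one] at h
        rw [htdef, h]
        norm_num
      have hta : t ^ (α - 1) = e := by
        rw [htdef, ← Real.rpow_mul he0.le, hexp1, Real.rpow_one]
      have claim : ∀ u, θ * t ≤ u → u ≤ t → θ * e ^ α' / α' ≤ u * e - u ^ α / α := by
        intro u h1 h2
        have hu0 : 0 < u := lt_of_lt_of_le (by positivity) h1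
        have hua : u ^ α = u * u ^ (α - 1) := by
          have h := Real.rpow_add hu0 1 (α - 1)
          rw [Real.rpow_one] at h
          rw [show α = 1 + (α - 1) by ring, h]
          norm_num
        have h3 : u ^ (α - 1) ≤ e := by
          rw [← hta]; exact Real.rpow_le_rpow hu0.le h2 (by linarith)
        have h5 : u ^ α ≤ u * e := by
          rw [hua]; exact mul_le_mul_of_nonneg_left h3 hu0.le
        have h6 : θ * e ^ α' ≤ u * e := by
          calc θ * e ^ α' = (θ * t) * e := by rw [← hte]; ring
            _ ≤ u * e := mul_le_mul_of_nonneg_right h1 he0.le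
        have h7 : u ^ α / α ≤ (u * e) / α := by gcongr
        have h8 : (u * e) / α' = u * e - (u * e) / α := by
          rw [div_eq_mul_one_div (u*e) α', div_eq_mul_one_div (u*e) α, hinv]; ring
        have h9 : θ * e ^ α' / α' ≤ (u * e) / α' := by gcongr
        linarith
      have hX : |η / lam| ^ α' = θ * e ^ α' := by
        rw [abs_div, abs_of_pos hlam0, Real.div_rpow (abs_nonneg η) hlam0.le, ← hedef,
          hθdef, div_eq_mul_one_div, mul_comm]
      rw [hX]
      set m : ℝ := Real.exp (2 * τ * (θ * e ^ α' / α')) with hmdef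
      have hθt : θ * t ≤ t := by
        calc θ * t ≤ 1 * t := mul_le_mul_of_nonneg_right hθ1.le ht0.le
          _ = t := one_mul t
      have hDm : D * m ≤ m * (t - θ * t) := by
        have h10 : (1 - θ) * 1 ≤ (1 - θ) * t := by
          apply mul_le_mul_of_nonneg_left ht1 (by linarith)
        have h10' : m * ((1 - θ) * 1) ≤ m * ((1 - θ) * t) :=
          mul_le_mul_of_nonneg_left h10 (Real.exp_pos _).le
        calc D * m ≤ (1 - θ) * m := by
              apply mul_le_mul_of_nonneg_right (min_le_right _ _) (Real.exp_pos _).le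
          _ = m * ((1 - θ) * 1) := by ring
          _ ≤ m * ((1 - θ) * t) := h10'
          _ = m * (t - θ * t) := by ring
      rcases le_or_gt 0 η with hpos | hneg
      · have heη : e = η := abs_of_nonneg hpos
        have hm : ∀ r ∈ Icc (θ * t) t, m ≤ F r := by
          intro r hr
          have hr0 : 0 < r := lt_of_lt_of_le (by positivity) hr.1
          apply Real.exp_le_exp.mpr
          apply mul_le_mul_of_nonneg_left ?_ (by positivity)
          have := claim r hr.1 hr.2
          rw [abs_of_pos hr0, ← heη]
          linarith
        have h11 := key (θ * t) t m hθt hm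
        calc D * m ≤ m * (t - θ * t) := hDm
          _ ≤ ∫ r, F r := h11
      · have heη : e = -η := abs_of_neg hneg
        have hm : ∀ r ∈ Icc (-t) (-(θ * t)), m ≤ F r := by
          intro r hr
          have hr0 : r < 0 := lt_of_le_of_lt hr.2 (neg_lt_zero.mpr (by positivity))
          apply Real.exp_le_exp.mpr
          apply mul_le_mul_of_nonneg_left ?_ (by positivity)
          have h12 : θ * t ≤ -r := by linarith [hr.2]
          have h13 : -r ≤ t := by linarith [hr.1]
          have := claim (-r) h12 h13
          rw [abs_of_neg hr0]
          have h14 : r * η = (-r) * e := by rw [heη]; ring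
          linarith [h14 ▸ this]
        have h11 := key (-t) (-(θ * t)) m (by linarith) hm
        calc D * m ≤ m * (t - θ * t) := hDm
          _ = m * (-(θ * t) - -t) := by ring
          _ ≤ ∫ r, F r := h11
  · -- upper bound
    calc (∫ r, F r) ≤ ∫ r, Real.exp (2 * τ * (|lam * η| ^ α' / α')) * G r := by
          apply integral_mono_of_nonneg (Filter.Eventually.of_forall hFpos)
            (hGint.const_mul _) (Filter.Eventually.of_forall hpt)
      _ = Real.exp (2 * τ * (|lam * η| ^ α' / α')) * C := by
          rw [integral_const_mul, hCdef]
      _ = C * Real.exp (2 * τ * (|lam * η| ^ α' / α')) := mul_comm _ _
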